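/- Let G be a decomposable graph with perfect order C_1,…,C_k of its maximal cliques, and set R_1 = C_1 and R_j = C_j \ (C_1 ∪ ⋯ ∪ C_{j−1}) for j ≥ 2. Let x ∈ Q_G and let Σ be an r×r symmetric positive definite matrix with Σ⁻¹ ∈ Z_G; write σ_A = Σ_A for A ⊆ V. Then ⟨x, Σ⁻¹⟩ = tr(x_{C_1} σ_{C_1}⁻¹) + Σ_{i=2}^k [ tr(x_{[i]·} σ_{[i]·}⁻¹) + tr(Δ_iᵀ σ_{[i]·}⁻¹ Δ_i x_{S_i}) ], where for i ≥ 2: x_{[i]·} = x_{R_i} − x_{R_i,S_i} x_{S_i}⁻¹ x_{S_i,R_i}, σ_{[i]·} = σ_{R_i} − σ_{R_i,S_i} σ_{S_i}⁻¹ σ_{S_i,R_i}, and Δ_i = x_{R_i,S_i} x_{S_i}⁻¹ − σ_{R_i,S_i} σ_{S_i}⁻¹ (here m_{A,B} denotes the submatrix (m_{ab})_{a∈A,b∈B}). -/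

import Mathlib

open Matrix

noncomputable section

/-- The linear space of symmetric `r × r` matrices vanishing off `E`. -/
def ZG (r : ℕ) (E : Finset (Fin r × Fin r)) : Set (Matrix (Fin r) (Fin r) ℝ) :=
  {y | y.IsSymm ∧ ∀ i j : Fin r, (i, j) ∉ E → y i j = 0}

/-- Rectangular submatrix `m_{A,B}` of `m`. -/
def subAB {r : ℕ} (m : Matrix (Fin r) (Fin r) ℝ) (A B : Finset (Fin r)) :
    Matrix A B ℝ := fun i j => m i j

/-- A complete set of vertices of the graph encoded by `E`. -/
def IsCompleteSet {r : ℕ} (E : Finset (Fin r × Fin r)) (A : Finset (Fin r)) : Prop :=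
  ∀ i ∈ A, ∀ j ∈ A, i ≠ j → (i, j) ∈ E

/-- A maximal clique of the graph encoded by `E`. -/
def IsMaxClique {r : ℕ} (E : Finset (Fin r × Fin r)) (A : Finset (Fin r)) : Prop :=
  IsCompleteSet E A ∧ ∀ B : Finset (Fin r), IsCompleteSet E B → A ⊆ B → A = B

/-- The separator `S_j = C_j ∩ (C_1 ∪ ⋯ ∪ C_{j-1})`. -/
def SepG {r k : ℕ} (C : Fin k → Finset (Fin r)) (j : Fin k) : Finset (Fin r) :=
  C j ∩ (Finset.univ.filter (fun l : Fin k => l < j)).biUnion C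

/-- The residual `R_j = C_j \ (C_1 ∪ ⋯ ∪ C_{j-1})`, with `R_1 = C_1`. -/
def ResG {r k : ℕ} (C : Fin k → Finset (Fin r)) (j : Fin k) : Finset (Fin r) :=
  C j \ (Finset.univ.filter (fun l : Fin k => l < j)).biUnion C

/-- `C` is a perfect order of the (maximal) cliques. -/
def IsPerfectOrder {r k : ℕ} (C : Fin k → Finset (Fin r)) : Prop :=
  ∀ j : Fin k, (j : ℕ) ≠ 0 → ∃ l : Fin k, l < j ∧ SepG C j ⊆ C l

namespace Dec

set_option linter.unusedSectionVars false

variable {V : Type} [Fintype V] [DecidableEq V]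

def sub (M : Matrix V V ℝ) (A B : Finset V) : Matrix A B ℝ := fun i j => M i j

def pad (A : Finset V) (M : Matrix A A ℝ) : Matrix V V ℝ :=
  fun i j => if h : i ∈ A ∧ j ∈ A then M ⟨i, h.1⟩ ⟨j, h.2⟩ else 0

lemma sub_sub' (M N : Matrix V V ℝ) (A B : Finset V) :
    sub (M - N) A B = sub M A B - sub N A B := rfl

lemma posDef_submatrix_inj {n m : Type*} [Fintype n] [DecidableEq n] [Fintype m]
    [DecidableEq m] {M : Matrix n n ℝ} (hM : M.PosDef) (f : m → n)
    (hf : Function.Injective f) : (M.submatrix f f).PosDef := by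
  refine Matrix.PosDef.of_dotProduct_mulVec_pos ?_ ?_
  · ext i j
    have h1 : Mᴴ = M := hM.1
    simp only [conjTranspose_apply, submatrix_apply, star_trivial]
    conv_lhs => rw [← h1]
    simp [conjTranspose_apply]
  · intro x hx
    set y : n → ℝ := fun v => ∑ i : m, if f i = v then x i else 0 with hy
    have hgen : ∀ h : n → ℝ, (∑ v : n, y v * h v) = ∑ i : m, x i * h (f i) := by
      intro h
      simp only [hy, Finset.sum_mul]
      rw [Finset.sum_comm]
      refine Finset.sum_congr rfl fun i _ => ?_
      simp only [ite_mul, zero_mul]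
      rw [Finset.sum_ite_eq Finset.univ (f i) (fun v => x i * h v)]
      simp
    have key : (star x) ⬝ᵥ ((M.submatrix f f).mulVec x) = (star y) ⬝ᵥ (M.mulVec y) := by
      simp only [dotProduct, mulVec, dotProduct, star_trivial, submatrix_apply]
      rw [hgen (fun v => ∑ w : n, M v w * y w)]
      refine Finset.sum_congr rfl fun i _ => ?_
      congr 1
      have : ∀ w : n, M (f i) w * y w = y w * M (f i) w := fun w => mul_comm _ _
      calc ∑ j : m, M (f i) (f j) * x j = ∑ j : m, x j * M (f i) (f j) := by
            refine Finset.sum_congr rfl fun j _ => mul_comm _ _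
        _ = ∑ w : n, y w * M (f i) w := (hgen (fun w => M (f i) w)).symm
        _ = ∑ w : n, M (f i) w * y w := Finset.sum_congr rfl fun w _ => mul_comm _ _
    have hy0 : y ≠ 0 := by
      obtain ⟨i, hi⟩ := Function.ne_iff.1 hx
      intro h0
      apply hi
      have : y (f i) = x i := by
        simp only [hy]
        rw [Finset.sum_eq_single i]
        · simp
        · intro j _ hj
          simp [hf.ne hj]
        · simp
      rw [h0] at this
      simpa using this.symm
    rw [key]
    exact hM.dotProduct_mulVec_pos hy0

lemma sub_posDef {M : Matrix V V ℝ} (hM : M.PosDef) (A : Finset V) :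
    (sub M A A).PosDef :=
  posDef_submatrix_inj hM (Subtype.val : A → V) Subtype.val_injective

lemma posDef_of_submatrix_equiv {n m : Type*} [Fintype n] [DecidableEq n] [Fintype m]
    [DecidableEq m] {M : Matrix n n ℝ} (e : m ≃ n) (h : (M.submatrix e e).PosDef) :
    M.PosDef := by
  have := posDef_submatrix_inj h e.symm e.symm.injective
  simpa [Matrix.submatrix_submatrix, Function.comp] using this



/-- equiv splitting V as a disjoint union of two finsets covering it -/
def splitEquiv {A B : Finset V} (hd : Disjoint A B) (hU : A ∪ B = Finset.univ) :
    (A ⊕ B) ≃ V where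
  toFun := Sum.elim (fun a => (a : V)) (fun b => (b : V))
  invFun v := if h : v ∈ A then Sum.inl ⟨v, h⟩ else
    Sum.inr ⟨v, by
      have : v ∈ A ∪ B := hU ▸ Finset.mem_univ v
      rcases Finset.mem_union.1 this with h' | h'
      · exact absurd h' h
      · exact h'⟩
  left_inv := by
    rintro (a | b)
    · simp
    · have : (b : V) ∉ A := fun h => (Finset.disjoint_left.1 hd h) b.2
      simp [this]
  right_inv := by
    intro v
    by_cases h : v ∈ A <;> simp [h]

@[simp] lemma splitEquiv_inl {A B : Finset V} (hd : Disjoint A B) (hU : A ∪ B = Finset.univ)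
    (a : A) : splitEquiv hd hU (Sum.inl a) = (a : V) := rfl
@[simp] lemma splitEquiv_inr {A B : Finset V} (hd : Disjoint A B) (hU : A ∪ B = Finset.univ)
    (b : B) : splitEquiv hd hU (Sum.inr b) = (b : V) := rfl

lemma submatrix_splitEquiv (M : Matrix V V ℝ) {A B : Finset V} (hd : Disjoint A B)
    (hU : A ∪ B = Finset.univ) :
    M.submatrix (splitEquiv hd hU) (splitEquiv hd hU) =
      fromBlocks (sub M A A) (sub M A B) (sub M B A) (sub M B B) := by
  ext i j
  cases i <;> cases j <;> rfl

/-- key 2x2 block fact: the inverse of the 11-block of the inverse is the Schur complement -/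
lemma blockInvAux {m n : Type} [Fintype m] [DecidableEq m] [Fintype n] [DecidableEq n]
    (M : Matrix (m ⊕ n) (m ⊕ n) ℝ) (hM : M.PosDef) :
    (M⁻¹.toBlocks₁₁)⁻¹ = M.toBlocks₁₁ - M.toBlocks₁₂ * M.toBlocks₂₂⁻¹ * M.toBlocks₂₁ := by
  have hdet : IsUnit M.det := isUnit_iff_ne_zero.2 hM.det_pos.ne'
  have h22 : (M.toBlocks₂₂).PosDef := posDef_submatrix_inj hM Sum.inr Sum.inr_injective
  have hdet22 : IsUnit (M.toBlocks₂₂).det := isUnit_iff_ne_zero.2 h22.det_pos.ne'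
  set a := M.toBlocks₁₁; set b := M.toBlocks₁₂; set c := M.toBlocks₂₁; set d := M.toBlocks₂₂
  set na := M⁻¹.toBlocks₁₁; set nb := M⁻¹.toBlocks₁₂; set nc := M⁻¹.toBlocks₂₁
  set nd := M⁻¹.toBlocks₂₂
  have h1 : fromBlocks na nb nc nd * fromBlocks a b c d = fromBlocks 1 0 0 1 := by
    rw [fromBlocks_toBlocks, fromBlocks_toBlocks, fromBlocks_one]
    exact nonsing_inv_mul _ hdet
  rw [fromBlocks_multiply] at h1
  have e1 : na * a + nb * c = 1 := congrArg toBlocks₁₁ h1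
  have e2 : na * b + nb * d = 0 := congrArg toBlocks₁₂ h1
  have hd1 : d * d⁻¹ = 1 := mul_nonsing_inv _ hdet22
  have hnb : nb = -(na * b * d⁻¹) := by
    have h3 : nb * d = -(na * b) := eq_neg_of_add_eq_zero_right e2
    calc nb = nb * (d * d⁻¹) := by rw [hd1, Matrix.mul_one]
      _ = (nb * d) * d⁻¹ := by rw [Matrix.mul_assoc]
      _ = -(na * b) * d⁻¹ := by rw [h3]
      _ = -(na * b * d⁻¹) := by rw [Matrix.neg_mul]
  have key : na * (a - b * d⁻¹ * c) = 1 := by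
    have heq : na * (a - b * d⁻¹ * c) = na * a + nb * c := by
      rw [Matrix.mul_sub, hnb, Matrix.neg_mul, sub_eq_add_neg]
      congr 2
      simp only [Matrix.mul_assoc]
    rw [heq, e1]
  exact inv_eq_right_inv key


lemma sub_eq_submatrix (M : Matrix V V ℝ) (A B : Finset V) :
    sub M A B = M.submatrix (Subtype.val : A → V) (Subtype.val : B → V) := rfl

/-- Schur complement formula for the inverse of a principal submatrix of the inverse. -/
lemma sub_inv_inv (K : Matrix V V ℝ) (hK : K.PosDef) {A R : Finset V}
    (hd : Disjoint A R) (hU : A ∪ R = Finset.univ) :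
    (sub K⁻¹ A A)⁻¹ = sub K A A - sub K A R * (sub K R R)⁻¹ * sub K R A := by
  set e := splitEquiv hd hU with he
  have hM : (K.submatrix e e).PosDef := posDef_submatrix_inj hK e e.injective
  have h := blockInvAux (K.submatrix e e) hM
  rw [Matrix.inv_submatrix_equiv] at h
  exact h


def subtypeEquiv (A' : Finset V) (F : Finset V) (hF : F ⊆ A') :
    ↥(F.subtype (· ∈ A')) ≃ ↥F where
  toFun x := ⟨((x : ↥A') : V), by have := x.2; rwa [Finset.mem_subtype] at this⟩
  invFun y := ⟨⟨(y : V), hF y.2⟩, by rw [Finset.mem_subtype]; exact y.2⟩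
  left_inv x := by apply Subtype.ext; apply Subtype.ext; rfl
  right_inv y := rfl

lemma sub_sub_eq (M : Matrix V V ℝ) (A' F G : Finset V) (hF : F ⊆ A') (hG : G ⊆ A') :
    sub (sub M A' A') (F.subtype (· ∈ A')) (G.subtype (· ∈ A')) =
      (sub M F G).submatrix (subtypeEquiv A' F hF) (subtypeEquiv A' G hG) := rfl

lemma sub_mul₃ {A' : Finset V} {W : Type} [Fintype W] [DecidableEq W]
    (P : Matrix ↥A' W ℝ) (Φ : Matrix W W ℝ) (Q : Matrix W ↥A' ℝ) (F G : Finset ↥A') :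
    sub (P * Φ * Q) F G =
      P.submatrix (Subtype.val : ↥F → ↥A') id * Φ * Q.submatrix id (Subtype.val : ↥G → ↥A') := by
  rw [sub_eq_submatrix,
    Matrix.submatrix_mul (P * Φ) Q (Subtype.val) id (Subtype.val) Function.bijective_id,
    Matrix.submatrix_mul P Φ (Subtype.val) id id Function.bijective_id,
    Matrix.submatrix_id_id]

lemma sub_restrict_left (K : Matrix V V ℝ) (A' F : Finset V) (hF : F ⊆ A') (R : Finset V) :
    (sub K A' R).submatrix (Subtype.val : ↥(F.subtype (· ∈ A')) → ↥A') id =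
      (sub K F R).submatrix (subtypeEquiv A' F hF) id := rfl

lemma sub_restrict_right (K : Matrix V V ℝ) (A' F : Finset V) (hF : F ⊆ A') (R : Finset V) :
    (sub K R A').submatrix id (Subtype.val : ↥(F.subtype (· ∈ A')) → ↥A') =
      (sub K R F).submatrix id (subtypeEquiv A' F hF) := rfl

lemma prodEntry {X Y W : Finset V} (K : Matrix V V ℝ) (Φ : Matrix ↥W ↥W ℝ)
    (i : ↥X) (j : ↥Y) :
    (sub K X W * Φ * sub K W Y) i j
      = ∑ r' : ↥W, (∑ r : ↥W, K i r * Φ r r') * K r' j := by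
  simp [Matrix.mul_apply, sub]

lemma prodZeroRow {X Y W Z : Finset V} (K : Matrix V V ℝ) (Φ : Matrix ↥W ↥W ℝ)
    (hz : ∀ z ∈ Z, ∀ w ∈ W, K z w = 0) (i : ↥X) (j : ↥Y) (hi : (i : V) ∈ Z) :
    (sub K X W * Φ * sub K W Y) i j = 0 := by
  rw [prodEntry]
  refine Finset.sum_eq_zero fun r' _ => ?_
  have : (∑ r : ↥W, K i r * Φ r r') = 0 :=
    Finset.sum_eq_zero fun r _ => by rw [hz _ hi _ r.2, zero_mul]
  rw [this, zero_mul]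

lemma prodZeroCol {X Y W Z : Finset V} (K : Matrix V V ℝ) (Φ : Matrix ↥W ↥W ℝ)
    (hz : ∀ w ∈ W, ∀ z ∈ Z, K w z = 0) (i : ↥X) (j : ↥Y) (hj : (j : V) ∈ Z) :
    (sub K X W * Φ * sub K W Y) i j = 0 := by
  rw [prodEntry]
  refine Finset.sum_eq_zero fun r' _ => ?_
  rw [hz _ r'.2 _ hj, mul_zero]

lemma prodCongr {X Y X' Y' W : Finset V} (K : Matrix V V ℝ) (Φ : Matrix ↥W ↥W ℝ)
    (i : ↥X) (j : ↥Y) (i' : ↥X') (j' : ↥Y') (hi : (i : V) = (i' : V)) (hj : (j : V) = (j' : V)) :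
    (sub K X W * Φ * sub K W Y) i j = (sub K X' W * Φ * sub K W Y') i' j' := by
  rw [prodEntry, prodEntry, hi, hj]


lemma submatrix_equiv_inj {m n : Type} [Fintype m] [Fintype n] (e : m ≃ n)
    (X Y : Matrix n n ℝ) (h : X.submatrix e e = Y.submatrix e e) : X = Y := by
  have := congrArg (fun Z : Matrix m m ℝ => Z.submatrix e.symm e.symm) h
  simpa [Matrix.submatrix_submatrix, Equiv.self_comp_symm, Matrix.submatrix_id_id] using this

lemma submatrix_mul₃_equiv {m n m' : Type} [Fintype m] [Fintype n] [Fintype m']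
    (X : Matrix m n ℝ) (Φ : Matrix n n ℝ) (Y : Matrix n m ℝ) (e : m' ≃ m) :
    X.submatrix e id * Φ * Y.submatrix id e = (X * Φ * Y).submatrix e e := by
  have h1 : X.submatrix (⇑e) id * Φ = (X * Φ).submatrix (⇑e) id := by
    have := Matrix.submatrix_mul_equiv X Φ (⇑e) (Equiv.refl n) id
    simpa using this
  rw [h1]
  have := Matrix.submatrix_mul_equiv (X * Φ) Y (⇑e) (Equiv.refl n) (⇑e)
  simpa using this

lemma submatrix_triple {m n m' n' p' : Type} [Fintype m] [Fintype n] [Fintype m'] [Fintype n']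
    [Fintype p']
    (X : Matrix m n ℝ) (Y : Matrix n n ℝ) (Z : Matrix n m ℝ)
    (e₁ : m' → m) (e₂ : n' ≃ n) (e₃ : p' → m) :
    X.submatrix e₁ e₂ * Y.submatrix e₂ e₂ * Z.submatrix e₂ e₃ =
      (X * Y * Z).submatrix e₁ e₃ := by
  rw [Matrix.submatrix_mul_equiv X Y e₁ e₂ e₂,
    Matrix.submatrix_mul_equiv (X * Y) Z e₁ e₂ e₃]

lemma sepSchur (K : Matrix V V ℝ) (hK : K.PosDef) (A' B : Finset V)
    (hU : A' ∪ B = Finset.univ)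
    (hz : ∀ i ∈ A' \ B, ∀ j ∈ B \ A', K i j = 0)
    (hz' : ∀ i ∈ B \ A', ∀ j ∈ A' \ B, K i j = 0) :
    (sub K⁻¹ (A' ∩ B) (A' ∩ B))⁻¹ =
      sub K (A' ∩ B) (A' ∩ B)
        - sub K (A' ∩ B) (B \ A') * (sub K (B \ A') (B \ A'))⁻¹ * sub K (B \ A') (A' ∩ B)
        - sub K (A' ∩ B) (A' \ B) * (sub K (A' \ B) (A' \ B))⁻¹ * sub K (A' \ B) (A' ∩ B) := by
  set S := A' ∩ B with hSdef
  set a := A' \ B with hadef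
  set R := B \ A' with hRdef
  have hSA : S ⊆ A' := Finset.inter_subset_left
  have haA : a ⊆ A' := Finset.sdiff_subset
  have hdAR : Disjoint A' R := Finset.disjoint_sdiff
  have hUAR : A' ∪ R = Finset.univ := by
    rw [hRdef, Finset.union_sdiff_self_eq_union, hU]
  have hKinv : K⁻¹.PosDef := hK.inv
  have hSigA : (sub K⁻¹ A' A').PosDef := sub_posDef hKinv A'
  have hWA := sub_inv_inv K hK hdAR hUAR
  have hK₂pd : ((sub K⁻¹ A' A')⁻¹).PosDef := hSigA.inv
  have hK₂inv : ((sub K⁻¹ A' A')⁻¹)⁻¹ = sub K⁻¹ A' A' :=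
    Matrix.nonsing_inv_nonsing_inv _ (isUnit_iff_ne_zero.2 hSigA.det_pos.ne')
  set S' := S.subtype (· ∈ A') with hS'def
  set a' := a.subtype (· ∈ A') with ha'def
  have hd' : Disjoint S' a' := by
    rw [Finset.disjoint_left]
    intro x hx hx'
    rw [hS'def, Finset.mem_subtype, hSdef, Finset.mem_inter] at hx
    rw [ha'def, Finset.mem_subtype, hadef, Finset.mem_sdiff] at hx'
    exact hx'.2 hx.2
  have hU' : S' ∪ a' = Finset.univ := by
    ext x
    simp only [Finset.mem_union, hS'def, ha'def, Finset.mem_subtype, hSdef, hadef,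
      Finset.mem_inter, Finset.mem_sdiff, Finset.mem_univ, iff_true]
    have := x.2
    by_cases hB : (x : V) ∈ B
    · exact Or.inl ⟨this, hB⟩
    · exact Or.inr ⟨this, hB⟩
  have h2 := sub_inv_inv ((sub K⁻¹ A' A')⁻¹) hK₂pd hd' hU'
  set eS := subtypeEquiv A' S hSA
  set ea := subtypeEquiv A' a haA
  have hRa : sub K R a = 0 := by
    ext i j; exact hz' _ i.2 _ j.2
  have haR : sub K a R = 0 := by
    ext i j; exact hz _ i.2 _ j.2
  have hSa : sub ((sub K⁻¹ A' A')⁻¹) S' a' = (sub K S a).submatrix eS ea := by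
    rw [hWA, sub_sub', sub_sub_eq K (A' := A') S a hSA haA,
      sub_mul₃, sub_restrict_right K A' a haA R, hRa]
    simp
    rfl
  have haS : sub ((sub K⁻¹ A' A')⁻¹) a' S' = (sub K a S).submatrix ea eS := by
    rw [hWA, sub_sub', sub_sub_eq K (A' := A') a S haA hSA,
      sub_mul₃, sub_restrict_left K A' a haA R, haR]
    simp
    rfl
  have haa : sub ((sub K⁻¹ A' A')⁻¹) a' a' = (sub K a a).submatrix ea ea := by
    rw [hWA, sub_sub', sub_sub_eq K (A' := A') a a haA haA,
      sub_mul₃, sub_restrict_left K A' a haA R, haR]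
    simp
    rfl
  have hSS : sub ((sub K⁻¹ A' A')⁻¹) S' S' =
      (sub K S S - sub K S R * (sub K R R)⁻¹ * sub K R S).submatrix eS eS := by
    rw [hWA, sub_sub', sub_sub_eq K (A' := A') S S hSA hSA,
      sub_mul₃, sub_restrict_left K A' S hSA R, sub_restrict_right K A' S hSA R,
      submatrix_mul₃_equiv]
    simp [Matrix.submatrix_sub]
    rfl
  have hLHS : sub (((sub K⁻¹ A' A')⁻¹)⁻¹) S' S' = (sub K⁻¹ S S).submatrix eS eS := by
    rw [hK₂inv, sub_sub_eq K⁻¹ (A' := A') S S hSA hSA]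
  rw [hLHS, hSa, haS, haa, hSS] at h2
  rw [Matrix.inv_submatrix_equiv, Matrix.inv_submatrix_equiv] at h2
  rw [submatrix_triple] at h2
  refine submatrix_equiv_inj eS _ _ ?_
  rw [h2]
  ext i j
  simp [Matrix.sub_apply]

lemma sub_entry (M : Matrix V V ℝ) (A B : Finset V) (i : A) (j : B) :
    sub M A B i j = M i j := rfl

lemma pad_pos {A : Finset V} (M : Matrix A A ℝ) {i j : V} (hi : i ∈ A) (hj : j ∈ A) :
    pad A M i j = M ⟨i, hi⟩ ⟨j, hj⟩ := by simp [pad, hi, hj]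

lemma pad_neg_left {A : Finset V} (M : Matrix A A ℝ) {i : V} (j : V) (hi : i ∉ A) :
    pad A M i j = 0 := by simp [pad, hi]

lemma pad_neg_right {A : Finset V} (M : Matrix A A ℝ) (i : V) {j : V} (hj : j ∉ A) :
    pad A M i j = 0 := by
  have : ¬ (i ∈ A ∧ j ∈ A) := fun h => hj h.2
  simp [pad, this]

lemma twoStep (K : Matrix V V ℝ) (hK : K.PosDef) (A' B : Finset V)
    (hU : A' ∪ B = Finset.univ)
    (hz : ∀ i ∈ A' \ B, ∀ j ∈ B \ A', K i j = 0)
    (hz' : ∀ i ∈ B \ A', ∀ j ∈ A' \ B, K i j = 0) :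
    K = pad A' ((sub K⁻¹ A' A')⁻¹) + pad B ((sub K⁻¹ B B)⁻¹)
        - pad (A' ∩ B) ((sub K⁻¹ (A' ∩ B) (A' ∩ B))⁻¹) := by
  have hY := sepSchur K hK A' B hU hz hz'
  have hUAR : A' ∪ (B \ A') = Finset.univ := by
    rw [Finset.union_sdiff_self_eq_union, hU]
  have hUBa : B ∪ (A' \ B) = Finset.univ := by
    rw [Finset.union_sdiff_self_eq_union, Finset.union_comm, hU]
  have hWA := sub_inv_inv K hK (A := A') (R := B \ A') Finset.disjoint_sdiff hUAR
  have hWB := sub_inv_inv K hK (A := B) (R := A' \ B) Finset.disjoint_sdiff hUBa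
  rw [hWA, hWB, hY]
  ext i j
  have hiU : i ∈ A' ∪ B := hU ▸ Finset.mem_univ i
  have hjU : j ∈ A' ∪ B := hU ▸ Finset.mem_univ j
  simp only [Matrix.add_apply, Matrix.sub_apply]
  by_cases hiA : i ∈ A' <;> by_cases hiB : i ∈ B <;>
    by_cases hjA : j ∈ A' <;> by_cases hjB : j ∈ B
  -- case 1: i,j both in S
  · have hiS : i ∈ A' ∩ B := Finset.mem_inter.2 ⟨hiA, hiB⟩
    have hjS : j ∈ A' ∩ B := Finset.mem_inter.2 ⟨hjA, hjB⟩
    rw [pad_pos _ hiA hjA, pad_pos _ hiB hjB, pad_pos _ hiS hjS]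
    simp only [Matrix.sub_apply, sub_entry]
    have e1 : (sub K A' (B \ A') * (sub K (B \ A') (B \ A'))⁻¹ * sub K (B \ A') A')
        ⟨i, hiA⟩ ⟨j, hjA⟩ =
        (sub K (A' ∩ B) (B \ A') * (sub K (B \ A') (B \ A'))⁻¹ * sub K (B \ A') (A' ∩ B))
        ⟨i, hiS⟩ ⟨j, hjS⟩ := prodCongr K _ _ _ _ _ rfl rfl
    have e2 : (sub K B (A' \ B) * (sub K (A' \ B) (A' \ B))⁻¹ * sub K (A' \ B) B)
        ⟨i, hiB⟩ ⟨j, hjB⟩ =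
        (sub K (A' ∩ B) (A' \ B) * (sub K (A' \ B) (A' \ B))⁻¹ * sub K (A' \ B) (A' ∩ B))
        ⟨i, hiS⟩ ⟨j, hjS⟩ := prodCongr K _ _ _ _ _ rfl rfl
    rw [← e1, ← e2]
    ring
  -- case 2: i in S, j in A' \ B
  · have hja : j ∈ A' \ B := Finset.mem_sdiff.2 ⟨hjA, hjB⟩
    have hjS : j ∉ A' ∩ B := fun h => hjB (Finset.mem_inter.1 h).2
    rw [pad_pos _ hiA hjA, pad_neg_right _ _ hjB, pad_neg_right _ _ hjS]
    simp only [Matrix.sub_apply, sub_entry]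
    rw [prodZeroCol K _ hz' ⟨i, hiA⟩ ⟨j, hjA⟩ hja]
    ring
  -- case 3: i in S, j in B \ A'
  · have hjR : j ∈ B \ A' := Finset.mem_sdiff.2 ⟨hjB, hjA⟩
    have hjS : j ∉ A' ∩ B := fun h => hjA (Finset.mem_inter.1 h).1
    rw [pad_pos _ hiB hjB, pad_neg_right _ _ hjA, pad_neg_right _ _ hjS]
    simp only [Matrix.sub_apply, sub_entry]
    rw [prodZeroCol K _ hz ⟨i, hiB⟩ ⟨j, hjB⟩ hjR]
    ring
  -- case: j in neither: impossible
  · exact absurd hjU (by simp [hjA, hjB])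
  -- case 5: i in A'\B, j in S
  · have hia : i ∈ A' \ B := Finset.mem_sdiff.2 ⟨hiA, hiB⟩
    have hiS : i ∉ A' ∩ B := fun h => hiB (Finset.mem_inter.1 h).2
    rw [pad_pos _ hiA hjA, pad_neg_left _ _ hiB, pad_neg_left _ _ hiS]
    simp only [Matrix.sub_apply, sub_entry]
    rw [prodZeroRow K _ hz ⟨i, hiA⟩ ⟨j, hjA⟩ hia]
    ring
  -- case 6: i in A'\B, j in A'\B
  · have hia : i ∈ A' \ B := Finset.mem_sdiff.2 ⟨hiA, hiB⟩
    have hiS : i ∉ A' ∩ B := fun h => hiB (Finset.mem_inter.1 h).2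
    rw [pad_pos _ hiA hjA, pad_neg_left _ _ hiB, pad_neg_left _ _ hiS]
    simp only [Matrix.sub_apply, sub_entry]
    rw [prodZeroRow K _ hz ⟨i, hiA⟩ ⟨j, hjA⟩ hia]
    ring
  -- case 7: i in A'\B, j in B\A'
  · have hia : i ∈ A' \ B := Finset.mem_sdiff.2 ⟨hiA, hiB⟩
    have hjR : j ∈ B \ A' := Finset.mem_sdiff.2 ⟨hjB, hjA⟩
    have hiS : i ∉ A' ∩ B := fun h => hiB (Finset.mem_inter.1 h).2
    rw [pad_neg_right _ _ hjA, pad_neg_left _ _ hiB, pad_neg_left _ _ hiS]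
    rw [hz _ hia _ hjR]
    ring
  -- case: j in neither: impossible
  · exact absurd hjU (by simp [hjA, hjB])
  -- case 9: i in B\A', j in S
  · have hiR : i ∈ B \ A' := Finset.mem_sdiff.2 ⟨hiB, hiA⟩
    have hiS : i ∉ A' ∩ B := fun h => hiA (Finset.mem_inter.1 h).1
    rw [pad_pos _ hiB hjB, pad_neg_left _ _ hiA, pad_neg_left _ _ hiS]
    simp only [Matrix.sub_apply, sub_entry]
    rw [prodZeroRow K _ hz' ⟨i, hiB⟩ ⟨j, hjB⟩ hiR]
    ring
  -- case 10: i in B\A', j in A'\B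
  · have hiR : i ∈ B \ A' := Finset.mem_sdiff.2 ⟨hiB, hiA⟩
    have hja : j ∈ A' \ B := Finset.mem_sdiff.2 ⟨hjA, hjB⟩
    have hiS : i ∉ A' ∩ B := fun h => hiA (Finset.mem_inter.1 h).1
    rw [pad_neg_left _ _ hiA, pad_neg_right _ _ hjB, pad_neg_left _ _ hiS]
    rw [hz' _ hiR _ hja]
    ring
  -- case 11: i in B\A', j in B\A'
  · have hiR : i ∈ B \ A' := Finset.mem_sdiff.2 ⟨hiB, hiA⟩
    have hiS : i ∉ A' ∩ B := fun h => hiA (Finset.mem_inter.1 h).1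
    rw [pad_pos _ hiB hjB, pad_neg_left _ _ hiA, pad_neg_left _ _ hiS]
    simp only [Matrix.sub_apply, sub_entry]
    rw [prodZeroRow K _ hz' ⟨i, hiB⟩ ⟨j, hjB⟩ hiR]
    ring
  -- case: j in neither
  · exact absurd hjU (by simp [hjA, hjB])
  -- cases: i in neither
  · exact absurd hiU (by simp [hiA, hiB])
  · exact absurd hiU (by simp [hiA, hiB])
  · exact absurd hiU (by simp [hiA, hiB])
  · exact absurd hiU (by simp [hiA, hiB])

def sepV {k : ℕ} (C : Fin k → Finset V) (j : Fin k) : Finset V :=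
  C j ∩ (Finset.univ.filter (fun l : Fin k => l < j)).biUnion C

lemma pad_neg_gen (A : Finset V) (M : Matrix A A ℝ) (i j : V) (h : ¬(i ∈ A ∧ j ∈ A)) :
    pad A M i j = 0 := by simp [pad, h]

lemma pad_sub'' (A : Finset V) (M N : Matrix A A ℝ) :
    pad A (M - N) = pad A M - pad A N := by
  ext i j
  simp only [pad, Matrix.sub_apply]
  split_ifs <;> simp

lemma pad_sum {ι : Type*} (A : Finset V) (s : Finset ι) (f : ι → Matrix A A ℝ) :
    pad A (∑ l ∈ s, f l) = ∑ l ∈ s, pad A (f l) := by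
  ext i j
  rw [Matrix.sum_apply]
  by_cases h : i ∈ A ∧ j ∈ A
  · simp [pad, h, Matrix.sum_apply]
  · simp [pad, h]

lemma pad_pad {A' F : Finset V} (hF : F ⊆ A') (N : Matrix F F ℝ) :
    pad A' (pad (F.subtype (· ∈ A')) (N.submatrix (subtypeEquiv A' F hF) (subtypeEquiv A' F hF)))
      = pad F N := by
  ext i j
  by_cases h : i ∈ F ∧ j ∈ F
  · have hiA : i ∈ A' := hF h.1
    have hjA : j ∈ A' := hF h.2
    have hiF' : (⟨i, hiA⟩ : ↥A') ∈ F.subtype (· ∈ A') := by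
      rw [Finset.mem_subtype]; exact h.1
    have hjF' : (⟨j, hjA⟩ : ↥A') ∈ F.subtype (· ∈ A') := by
      rw [Finset.mem_subtype]; exact h.2
    rw [pad_pos _ hiA hjA, pad_pos _ hiF' hjF', pad_pos _ h.1 h.2]
    rfl
  · rw [pad_neg_gen F N i j h]
    by_cases hiA : i ∈ A'
    · by_cases hjA : j ∈ A'
      · rw [pad_pos _ hiA hjA]
        have : ¬((⟨i, hiA⟩ : ↥A') ∈ F.subtype (· ∈ A') ∧ (⟨j, hjA⟩ : ↥A') ∈ F.subtype (· ∈ A')) := by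
          simp only [Finset.mem_subtype]
          exact fun hc => h ⟨hc.1, hc.2⟩
        rw [pad_neg_gen _ _ _ _ this]
      · rw [pad_neg_right _ _ hjA]
    · rw [pad_neg_left _ _ hiA]

/-- transport of a padded inverse through the nested subtype -/
lemma pad_pad_inv {A' F : Finset V} (hF : F ⊆ A') (M : Matrix V V ℝ) :
    pad A' (pad (F.subtype (· ∈ A'))
      ((sub (sub M A' A') (F.subtype (· ∈ A')) (F.subtype (· ∈ A')))⁻¹))
      = pad F ((sub M F F)⁻¹) := by
  rw [sub_sub_eq M A' F F hF hF, Matrix.inv_submatrix_equiv]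
  exact pad_pad hF _


set_option maxHeartbeats 1000000 in
lemma main (m : ℕ) : ∀ (W : Type) [Fintype W] [DecidableEq W] (C : Fin m → Finset W)
    (_ : ∀ v : W, ∃ l, v ∈ C l)
    (_ : ∀ j : Fin m, (j : ℕ) ≠ 0 → ∃ l, l < j ∧ sepV C j ⊆ C l)
    (K : Matrix W W ℝ) (_ : K.PosDef)
    (_ : ∀ i j : W, K i j ≠ 0 → ∃ l, i ∈ C l ∧ j ∈ C l),
    K = (∑ l : Fin m, pad (C l) ((sub K⁻¹ (C l) (C l))⁻¹))
        - ∑ l : Fin m, pad (sepV C l) ((sub K⁻¹ (sepV C l) (sepV C l))⁻¹) := by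
  induction m with
  | zero =>
    intro W _ _ C hcover hperf K hK hsupp
    have hempty : IsEmpty W := ⟨fun v => by obtain ⟨l, _⟩ := hcover v; exact l.elim0⟩
    ext i j
    exact (hempty.false i).elim
  | succ m IH =>
    intro W _ _ C hcover hperf K hK hsupp
    classical
    set A' : Finset W := Finset.univ.biUnion (fun l : Fin m => C l.castSucc) with hA'
    set B := C (Fin.last m) with hB
    have hmemA' : ∀ v : W, v ∈ A' ↔ ∃ l : Fin m, v ∈ C l.castSucc := by
      intro v; simp [hA']
    have hsubA' : ∀ l : Fin m, C l.castSucc ⊆ A' := by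
      intro l v hv
      rw [hmemA']
      exact ⟨l, hv⟩
    have hUnion : A' ∪ B = Finset.univ := by
      ext v
      simp only [Finset.mem_union, Finset.mem_univ, iff_true]
      obtain ⟨l, hl⟩ := hcover v
      rcases Fin.eq_castSucc_or_eq_last l with ⟨l', rfl⟩ | rfl
      · exact Or.inl ((hmemA' v).2 ⟨l', hl⟩)
      · exact Or.inr hl
    have hSsep : sepV C (Fin.last m) = A' ∩ B := by
      ext v
      simp only [sepV, Finset.mem_inter, Finset.mem_biUnion, Finset.mem_filter,
        Finset.mem_univ, true_and, hmemA']
      constructor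
      · rintro ⟨hvB, l, hl, hvl⟩
        obtain ⟨l', rfl⟩ := Fin.exists_castSucc_eq.2 (ne_of_lt hl)
        exact ⟨⟨l', hvl⟩, hvB⟩
      · rintro ⟨⟨l', hv⟩, hvB⟩
        exact ⟨hvB, l'.castSucc, Fin.castSucc_lt_last l', hv⟩
    have hz : ∀ i ∈ A' \ B, ∀ j ∈ B \ A', K i j = 0 := by
      intro i hi j hj
      by_contra hne
      obtain ⟨l, hil, hjl⟩ := hsupp i j hne
      rcases Fin.eq_castSucc_or_eq_last l with ⟨l', rfl⟩ | rfl
      · exact (Finset.mem_sdiff.1 hj).2 (hsubA' l' hjl)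
      · exact (Finset.mem_sdiff.1 hi).2 hil
    have hz' : ∀ i ∈ B \ A', ∀ j ∈ A' \ B, K i j = 0 := by
      intro i hi j hj
      by_contra hne
      obtain ⟨l, hil, hjl⟩ := hsupp i j hne
      rcases Fin.eq_castSucc_or_eq_last l with ⟨l', rfl⟩ | rfl
      · exact (Finset.mem_sdiff.1 hi).2 (hsubA' l' hil)
      · exact (Finset.mem_sdiff.1 hj).2 hjl
    have htwo := twoStep K hK A' B hUnion hz hz'
    have hKinvpd : K⁻¹.PosDef := hK.inv
    have hSigA : (sub K⁻¹ A' A').PosDef := sub_posDef hKinvpd A'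
    have hK'pd : ((sub K⁻¹ A' A')⁻¹).PosDef := hSigA.inv
    have hinvinv : ((sub K⁻¹ A' A')⁻¹)⁻¹ = sub K⁻¹ A' A' :=
      Matrix.nonsing_inv_nonsing_inv _ (isUnit_iff_ne_zero.2 hSigA.det_pos.ne')
    have hUAR : A' ∪ (B \ A') = Finset.univ := by
      rw [Finset.union_sdiff_self_eq_union, hUnion]
    have hWA := sub_inv_inv K hK (A := A') (R := B \ A') Finset.disjoint_sdiff hUAR
    -- the reduced clique system on A'
    have hmemD : ∀ (l : Fin m) (x : ↥A'),
        x ∈ (C l.castSucc).subtype (· ∈ A') ↔ (x : W) ∈ C l.castSucc := by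
      intro l x; rw [Finset.mem_subtype]
    have hcover' : ∀ v : ↥A', ∃ l : Fin m, v ∈ (C l.castSucc).subtype (· ∈ A') := by
      intro v
      have := v.2
      rw [hmemA'] at this
      obtain ⟨l, hl⟩ := this
      exact ⟨l, (hmemD l v).2 hl⟩
    have hsepD : ∀ jj : Fin m,
        sepV (fun l : Fin m => (C l.castSucc).subtype (· ∈ A')) jj
          = (sepV C jj.castSucc).subtype (· ∈ A') := by
      intro jj
      ext x
      simp only [sepV, Finset.mem_inter, Finset.mem_biUnion, Finset.mem_filter,
        Finset.mem_univ, true_and, Finset.mem_subtype]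
      constructor
      · rintro ⟨h1, l, hl, h2⟩
        exact ⟨h1, l.castSucc, Fin.castSucc_lt_castSucc_iff.2 hl, h2⟩
      · rintro ⟨h1, l', hl', h2⟩
        obtain ⟨l₀, rfl⟩ := Fin.exists_castSucc_eq.2
          (ne_of_lt (lt_of_lt_of_le hl' (Fin.castSucc_lt_last jj).le))
        exact ⟨h1, l₀, Fin.castSucc_lt_castSucc_iff.1 hl', h2⟩
    have hperf' : ∀ jj : Fin m, (jj : ℕ) ≠ 0 → ∃ l, l < jj ∧
        sepV (fun l : Fin m => (C l.castSucc).subtype (· ∈ A')) jj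
          ⊆ (C l.castSucc).subtype (· ∈ A') := by
      intro jj hjj
      obtain ⟨l, hl, hsub⟩ := hperf jj.castSucc (by simpa using hjj)
      obtain ⟨l₀, rfl⟩ := Fin.exists_castSucc_eq.2
        (ne_of_lt (lt_of_lt_of_le hl (Fin.castSucc_lt_last jj).le))
      refine ⟨l₀, Fin.castSucc_lt_castSucc_iff.1 hl, ?_⟩
      intro x hx
      rw [hsepD jj, Finset.mem_subtype] at hx
      exact (hmemD l₀ x).2 (hsub hx)
    have hsupp' : ∀ i j : ↥A', ((sub K⁻¹ A' A')⁻¹) i j ≠ 0 →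
        ∃ l : Fin m, i ∈ (C l.castSucc).subtype (· ∈ A')
          ∧ j ∈ (C l.castSucc).subtype (· ∈ A') := by
      intro i j hne
      rcases Nat.eq_zero_or_pos m with hm | hm
      · subst hm
        have := i.2
        rw [hmemA'] at this
        obtain ⟨l, _⟩ := this
        exact l.elim0
      obtain ⟨l₁, hl₁, hS⟩ := hperf (Fin.last m) (by simp; omega)
      obtain ⟨l₁', rfl⟩ := Fin.exists_castSucc_eq.2 (ne_of_lt hl₁)
      have hS' : A' ∩ B ⊆ C l₁'.castSucc := by rw [← hSsep]; exact hS
      have hSD : ∀ x : ↥A', (x : W) ∈ B → x ∈ (C l₁'.castSucc).subtype (· ∈ A') := by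
        intro x hx
        exact (hmemD l₁' x).2 (hS' (Finset.mem_inter.2 ⟨x.2, hx⟩))
      have hcase : K i j ≠ 0 ∨
          (sub K A' (B \ A') * (sub K (B \ A') (B \ A'))⁻¹ * sub K (B \ A') A') i j ≠ 0 := by
        by_contra hc
        push_neg at hc
        apply hne
        rw [hWA, Matrix.sub_apply, sub_entry, hc.1, hc.2, sub_zero]
      rcases hcase with hc | hc
      · obtain ⟨l, hil, hjl⟩ := hsupp _ _ hc
        rcases Fin.eq_castSucc_or_eq_last l with ⟨l', rfl⟩ | rfl
        · exact ⟨l', (hmemD l' i).2 hil, (hmemD l' j).2 hjl⟩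
        · exact ⟨l₁', hSD i hil, hSD j hjl⟩
      · rw [prodEntry] at hc
        obtain ⟨r', _, hterm⟩ := Finset.exists_ne_zero_of_sum_ne_zero hc
        obtain ⟨hsum, hKj⟩ := mul_ne_zero_iff.1 hterm
        obtain ⟨r, _, hr⟩ := Finset.exists_ne_zero_of_sum_ne_zero hsum
        obtain ⟨hKi, -⟩ := mul_ne_zero_iff.1 hr
        -- i connects into B \ A', hence i ∈ B
        have hiB : (i : W) ∈ B := by
          obtain ⟨l, hil, hrl⟩ := hsupp _ _ hKi
          rcases Fin.eq_castSucc_or_eq_last l with ⟨l', rfl⟩ | rfl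
          · exact absurd (hsubA' l' hrl) (Finset.mem_sdiff.1 r.2).2
          · exact hil
        have hjB : (j : W) ∈ B := by
          obtain ⟨l, hrl, hjl⟩ := hsupp _ _ hKj
          rcases Fin.eq_castSucc_or_eq_last l with ⟨l', rfl⟩ | rfl
          · exact absurd (hsubA' l' hrl) (Finset.mem_sdiff.1 r'.2).2
          · exact hjl
        exact ⟨l₁', hSD i hiB, hSD j hjB⟩
    have hIH := IH ↥A' (fun l : Fin m => (C l.castSucc).subtype (· ∈ A'))
      hcover' hperf' ((sub K⁻¹ A' A')⁻¹) hK'pd hsupp'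
    rw [hinvinv] at hIH
    have hsepsub : ∀ jj : Fin m, sepV C jj.castSucc ⊆ A' := by
      intro jj v hv
      rw [sepV, Finset.mem_inter] at hv
      obtain ⟨-, hv2⟩ := hv
      rw [Finset.mem_biUnion] at hv2
      obtain ⟨l, hl, hvl⟩ := hv2
      rw [Finset.mem_filter] at hl
      obtain ⟨l₀, rfl⟩ := Fin.exists_castSucc_eq.2
        (ne_of_lt (lt_of_lt_of_le hl.2 (Fin.castSucc_lt_last jj).le))
      exact hsubA' l₀ hvl
    have hPA : pad A' ((sub K⁻¹ A' A')⁻¹)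
        = (∑ l : Fin m, pad (C l.castSucc) ((sub K⁻¹ (C l.castSucc) (C l.castSucc))⁻¹))
          - ∑ l : Fin m, pad (sepV C l.castSucc)
              ((sub K⁻¹ (sepV C l.castSucc) (sepV C l.castSucc))⁻¹) := by
      rw [hIH, pad_sub'', pad_sum, pad_sum]
      congr 1
      · exact Finset.sum_congr rfl fun l _ => pad_pad_inv (hsubA' l) K⁻¹
      · refine Finset.sum_congr rfl fun l _ => ?_
        rw [hsepD l]
        exact pad_pad_inv (hsepsub l) K⁻¹
    rw [Fin.sum_univ_castSucc
      (f := fun l : Fin (m+1) => pad (C l) ((sub K⁻¹ (C l) (C l))⁻¹))]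
    rw [Fin.sum_univ_castSucc
      (f := fun l : Fin (m+1) => pad (sepV C l) ((sub K⁻¹ (sepV C l) (sepV C l))⁻¹))]
    rw [← hSsep] at htwo
    conv_lhs => rw [htwo]
    rw [hPA]
    abel

lemma trace_mul_pad (x : Matrix V V ℝ) (A : Finset V) (M : Matrix A A ℝ) :
    Matrix.trace (x * pad A M) = Matrix.trace (sub x A A * M) := by
  rw [Matrix.trace, Matrix.trace]
  simp only [Matrix.diag_apply, Matrix.mul_apply, sub_entry]
  calc ∑ i : V, ∑ j : V, x i j * pad A M j i
      = ∑ i ∈ A, ∑ j : V, x i j * pad A M j i := by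
        refine (Finset.sum_subset (Finset.subset_univ A) fun i _ hiA => ?_).symm
        exact Finset.sum_eq_zero fun j _ => by rw [pad_neg_right _ _ hiA, mul_zero]
    _ = ∑ i ∈ A, ∑ j ∈ A, x i j * pad A M j i := by
        refine Finset.sum_congr rfl fun i _ => ?_
        refine (Finset.sum_subset (Finset.subset_univ A) fun j _ hjA => ?_).symm
        rw [pad_neg_left _ _ hjA, mul_zero]
    _ = ∑ i : A, ∑ j : A, x (i : V) (j : V) * pad A M (j : V) (i : V) := by
        rw [← Finset.sum_coe_sort A]
        exact Finset.sum_congr rfl fun i _ => (Finset.sum_coe_sort A _).symm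
    _ = ∑ i : A, ∑ j : A, x (i : V) (j : V) * M j i := by
        refine Finset.sum_congr rfl fun i _ => Finset.sum_congr rfl fun j _ => ?_
        rw [pad_pos _ j.2 i.2]

def unionEquiv {R S : Finset V} (hd : Disjoint R S) : (↥R ⊕ ↥S) ≃ ↥(R ∪ S) where
  toFun := Sum.elim (fun a => ⟨(a : V), Finset.mem_union_left _ a.2⟩)
    (fun b => ⟨(b : V), Finset.mem_union_right _ b.2⟩)
  invFun v := if h : (v : V) ∈ R then Sum.inl ⟨v, h⟩ else
    Sum.inr ⟨v, by
      rcases Finset.mem_union.1 v.2 with h' | h'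
      · exact absurd h' h
      · exact h'⟩
  left_inv := by
    rintro (a | b)
    · simp
    · have : (b : V) ∉ R := fun h => (Finset.disjoint_left.1 hd h) b.2
      simp [this]
  right_inv := by
    intro v
    by_cases h : (v : V) ∈ R <;> simp [h]

lemma trace_submatrix_equiv {m n : Type} [Fintype m] [Fintype n] (e : m ≃ n)
    (N : Matrix n n ℝ) : Matrix.trace (N.submatrix e e) = Matrix.trace N := by
  rw [Matrix.trace, Matrix.trace]
  exact Fintype.sum_equiv e _ _ fun i => rfl

lemma trace_fromBlocks {m n : Type} [Fintype m] [Fintype n]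
    (A : Matrix m m ℝ) (B : Matrix m n ℝ) (C : Matrix n m ℝ) (D : Matrix n n ℝ) :
    Matrix.trace (fromBlocks A B C D) = Matrix.trace A + Matrix.trace D := by
  rw [Matrix.trace, Matrix.trace, Matrix.trace, Fintype.sum_sum_type]
  rfl

lemma sub_union_blocks (M : Matrix V V ℝ) {R S : Finset V} (hd : Disjoint R S) :
    (sub M (R ∪ S) (R ∪ S)).submatrix (unionEquiv hd) (unionEquiv hd)
      = fromBlocks (sub M R R) (sub M R S) (sub M S R) (sub M S S) := by
  ext p q
  cases p <;> cases q <;> rfl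

lemma traceAlg {p q : Type} [Fintype p] [DecidableEq p] [Fintype q] [DecidableEq q]
    (xR : Matrix p p ℝ) (xRS : Matrix p q ℝ) (xS : Matrix q q ℝ)
    (σRS : Matrix p q ℝ) (σS : Matrix q q ℝ) (N : Matrix p p ℝ)
    (hx1 : xS * xS⁻¹ = 1) (hx2 : xS⁻¹ * xS = 1)
    (hxsS : xSᵀ = xS) (hσsS : σSᵀ = σS) :
    Matrix.trace (xR * N + xRS * (-(σS⁻¹ * σRSᵀ * N)))
      + Matrix.trace (xRSᵀ * (-(N * σRS * σS⁻¹))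
          + xS * (σS⁻¹ + σS⁻¹ * σRSᵀ * N * σRS * σS⁻¹))
      - Matrix.trace (xS * σS⁻¹)
    = Matrix.trace ((xR - xRS * xS⁻¹ * xRSᵀ) * N)
      + Matrix.trace ((xRS * xS⁻¹ - σRS * σS⁻¹)ᵀ * N * (xRS * xS⁻¹ - σRS * σS⁻¹) * xS) := by
  have hcyc1 : Matrix.trace (xRS * (xS⁻¹ * (xRSᵀ * N)))
      = Matrix.trace (xS⁻¹ * (xRSᵀ * (N * xRS))) := by
    rw [Matrix.trace_mul_comm]
    simp only [Matrix.mul_assoc]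
  have hcyc2 : Matrix.trace (xS⁻¹ * (xRSᵀ * (N * (σRS * (σS⁻¹ * xS)))))
      = Matrix.trace (xRSᵀ * (N * (σRS * σS⁻¹))) := by
    rw [Matrix.trace_mul_comm]
    simp only [Matrix.mul_assoc, hx1, Matrix.mul_one]
  have hcyc3 : Matrix.trace (xRS * (σS⁻¹ * (σRSᵀ * N)))
      = Matrix.trace (σS⁻¹ * (σRSᵀ * (N * xRS))) := by
    rw [Matrix.trace_mul_comm]
    simp only [Matrix.mul_assoc]
  have hcyc4 : Matrix.trace (xS * (σS⁻¹ * (σRSᵀ * (N * (σRS * σS⁻¹)))))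
      = Matrix.trace (σS⁻¹ * (σRSᵀ * (N * (σRS * (σS⁻¹ * xS))))) := by
    rw [Matrix.trace_mul_comm]
    simp only [Matrix.mul_assoc]
  simp only [Matrix.transpose_sub, Matrix.transpose_mul, Matrix.transpose_nonsing_inv,
    hxsS, hσsS, Matrix.sub_mul, Matrix.mul_sub, Matrix.add_mul, Matrix.mul_add,
    Matrix.mul_neg, Matrix.neg_mul, Matrix.trace_add, Matrix.trace_sub, Matrix.trace_neg,
    Matrix.mul_assoc, hx1, hx2, Matrix.mul_one]
  linarith [hcyc1, hcyc2, hcyc3, hcyc4]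

lemma cliqueTrace (x Sg : Matrix V V ℝ) {R S : Finset V} (hd : Disjoint R S)
    (hxs : x.IsSymm) (hσs : Sg.IsSymm)
    (hxU : (sub x (R ∪ S) (R ∪ S)).PosDef) (hσU : (sub Sg (R ∪ S) (R ∪ S)).PosDef) :
    Matrix.trace (sub x (R ∪ S) (R ∪ S) * (sub Sg (R ∪ S) (R ∪ S))⁻¹)
      - Matrix.trace (sub x S S * (sub Sg S S)⁻¹)
    = Matrix.trace ((sub x R R - sub x R S * (sub x S S)⁻¹ * sub x S R) *
        (sub Sg R R - sub Sg R S * (sub Sg S S)⁻¹ * sub Sg S R)⁻¹)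
      + Matrix.trace ((sub x R S * (sub x S S)⁻¹ - sub Sg R S * (sub Sg S S)⁻¹)ᵀ *
          (sub Sg R R - sub Sg R S * (sub Sg S S)⁻¹ * sub Sg S R)⁻¹ *
          (sub x R S * (sub x S S)⁻¹ - sub Sg R S * (sub Sg S S)⁻¹) * sub x S S) := by
  have hxSpd : (sub x S S).PosDef :=
    posDef_submatrix_inj hxU
      (fun j : ↥S => (⟨(j : V), Finset.mem_union_right R j.2⟩ : ↥(R ∪ S)))
      (fun i j h => Subtype.ext (congrArg (fun z : ↥(R ∪ S) => (z : V)) h))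
  have hσSpd : (sub Sg S S).PosDef :=
    posDef_submatrix_inj hσU
      (fun j : ↥S => (⟨(j : V), Finset.mem_union_right R j.2⟩ : ↥(R ∪ S)))
      (fun i j h => Subtype.ext (congrArg (fun z : ↥(R ∪ S) => (z : V)) h))
  have hxSR : sub x S R = (sub x R S)ᵀ := by
    ext i j
    exact congrFun (congrFun hxs (j : V)) (i : V)
  have hσSR : sub Sg S R = (sub Sg R S)ᵀ := by
    ext i j
    exact congrFun (congrFun hσs (j : V)) (i : V)
  have hxsS : (sub x S S)ᵀ = sub x S S := by
    ext i j
    exact congrFun (congrFun hxs (i : V)) (j : V)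
  have hσsS : (sub Sg S S)ᵀ = sub Sg S S := by
    ext i j
    exact congrFun (congrFun hσs (i : V)) (j : V)
  have hx1 : sub x S S * (sub x S S)⁻¹ = 1 :=
    Matrix.mul_nonsing_inv _ (isUnit_iff_ne_zero.2 hxSpd.det_pos.ne')
  have hx2 : (sub x S S)⁻¹ * sub x S S = 1 :=
    Matrix.nonsing_inv_mul _ (isUnit_iff_ne_zero.2 hxSpd.det_pos.ne')
  set e := unionEquiv hd with he
  have hMx := sub_union_blocks x hd
  have hMσ := sub_union_blocks Sg hd
  rw [hxSR] at hMx
  rw [hσSR] at hMσ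
  have hMσpd : (fromBlocks (sub Sg R R) (sub Sg R S) (sub Sg R S)ᵀ (sub Sg S S)).PosDef := by
    rw [← hMσ]
    exact posDef_submatrix_inj hσU e e.injective
  have htr : Matrix.trace (sub x (R ∪ S) (R ∪ S) * (sub Sg (R ∪ S) (R ∪ S))⁻¹)
      = Matrix.trace (fromBlocks (sub x R R) (sub x R S) (sub x R S)ᵀ (sub x S S) *
          (fromBlocks (sub Sg R R) (sub Sg R S) (sub Sg R S)ᵀ (sub Sg S S))⁻¹) := by
    calc Matrix.trace (sub x (R ∪ S) (R ∪ S) * (sub Sg (R ∪ S) (R ∪ S))⁻¹)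
        = Matrix.trace ((sub x (R ∪ S) (R ∪ S) * (sub Sg (R ∪ S) (R ∪ S))⁻¹).submatrix e e) :=
          (trace_submatrix_equiv e _).symm
      _ = Matrix.trace ((sub x (R ∪ S) (R ∪ S)).submatrix e e *
            ((sub Sg (R ∪ S) (R ∪ S))⁻¹).submatrix e e) := by
          rw [Matrix.submatrix_mul_equiv]
      _ = Matrix.trace ((sub x (R ∪ S) (R ∪ S)).submatrix e e *
            ((sub Sg (R ∪ S) (R ∪ S)).submatrix e e)⁻¹) := by
          rw [Matrix.inv_submatrix_equiv]
      _ = _ := by rw [hMx, hMσ]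
  have h11 := blockInvAux _ hMσpd
  simp only [toBlocks_fromBlocks₁₁, toBlocks_fromBlocks₁₂, toBlocks_fromBlocks₂₁,
    toBlocks_fromBlocks₂₂] at h11
  have h11pd : ((fromBlocks (sub Sg R R) (sub Sg R S) (sub Sg R S)ᵀ (sub Sg S S))⁻¹.toBlocks₁₁).PosDef :=
    posDef_submatrix_inj hMσpd.inv Sum.inl Sum.inl_injective
  have hschpd : (sub Sg R R - sub Sg R S * (sub Sg S S)⁻¹ * (sub Sg R S)ᵀ).PosDef :=
    h11 ▸ h11pd.inv
  haveI iσS : Invertible (sub Sg S S) :=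
    Matrix.invertibleOfIsUnitDet _ (isUnit_iff_ne_zero.2 hσSpd.det_pos.ne')
  haveI isch : Invertible (sub Sg R R - sub Sg R S * (sub Sg S S)⁻¹ * (sub Sg R S)ᵀ) :=
    Matrix.invertibleOfIsUnitDet _ (isUnit_iff_ne_zero.2 hschpd.det_pos.ne')
  have hinvOfσS : ⅟(sub Sg S S) = (sub Sg S S)⁻¹ := Matrix.invOf_eq_nonsing_inv _
  haveI isch' : Invertible (sub Sg R R - sub Sg R S * ⅟(sub Sg S S) * (sub Sg R S)ᵀ) := by
    rw [hinvOfσS]; exact isch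
  haveI iMσ : Invertible (fromBlocks (sub Sg R R) (sub Sg R S) (sub Sg R S)ᵀ (sub Sg S S)) :=
    Matrix.invertibleOfIsUnitDet _ (isUnit_iff_ne_zero.2 hMσpd.det_pos.ne')
  have hforms := Matrix.invOf_fromBlocks₂₂_eq (sub Sg R R) (sub Sg R S) (sub Sg R S)ᵀ (sub Sg S S)
  simp only [Matrix.invOf_eq_nonsing_inv] at hforms
  rw [hxSR, hσSR, htr, hforms, fromBlocks_multiply, trace_fromBlocks]
  exact traceAlg (sub x R R) (sub x R S) (sub x S S) (sub Sg R S) (sub Sg S S) _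
    hx1 hx2 hxsS hσsS
end Dec

lemma existsMaxClique {r : ℕ} (E : Finset (Fin r × Fin r)) (D : Finset (Fin r))
    (hD : IsCompleteSet E D) : ∃ B : Finset (Fin r), IsMaxClique E B ∧ D ⊆ B := by
  classical
  set T := Finset.univ.powerset.filter (fun B => IsCompleteSet E B ∧ D ⊆ B) with hT
  have hDT : D ∈ T := by
    rw [hT, Finset.mem_filter, Finset.mem_powerset]
    exact ⟨Finset.subset_univ D, hD, subset_rfl⟩
  obtain ⟨B, hBT, hBmax⟩ := T.exists_max_image (fun B => B.card) ⟨D, hDT⟩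
  rw [hT, Finset.mem_filter] at hBT
  refine ⟨B, ⟨hBT.2.1, ?_⟩, hBT.2.2⟩
  intro B' hB' hBB'
  refine Finset.eq_of_subset_of_card_le hBB' ?_
  refine hBmax B' ?_
  rw [hT, Finset.mem_filter, Finset.mem_powerset]
  exact ⟨Finset.subset_univ B', hB', hBT.2.2.trans hBB'⟩

theorem statement2 (r k : ℕ) (hr : 2 ≤ r) (hk : 0 < k)
    (E : Finset (Fin r × Fin r))
    (hEsymm : ∀ i j : Fin r, (i, j) ∈ E → (j, i) ∈ E)
    (hEdiag : ∀ i : Fin r, (i, i) ∈ E)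
    (C : Fin k → Finset (Fin r))
    (hmax : ∀ i : Fin k, IsMaxClique E (C i))
    (hinj : Function.Injective C)
    (hall : ∀ A : Finset (Fin r), IsMaxClique E A → ∃ i : Fin k, C i = A)
    (hperf : IsPerfectOrder C)
    (x : Matrix (Fin r) (Fin r) ℝ)
    (hx : x ∈ ZG r E) (hxpd : ∀ i : Fin k, (subAB x (C i) (C i)).PosDef)
    (Sg : Matrix (Fin r) (Fin r) ℝ) (hSg : Sg.PosDef) (hSginv : Sg⁻¹ ∈ ZG r E) :
    Matrix.trace (x * Sg⁻¹) =
      Matrix.trace (subAB x (C ⟨0, hk⟩) (C ⟨0, hk⟩) * (subAB Sg (C ⟨0, hk⟩) (C ⟨0, hk⟩))⁻¹)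
      + ∑ i ∈ Finset.univ.filter (fun i : Fin k => (i : ℕ) ≠ 0),
         (Matrix.trace
            ((subAB x (ResG C i) (ResG C i)
              - subAB x (ResG C i) (SepG C i) * (subAB x (SepG C i) (SepG C i))⁻¹
                  * subAB x (SepG C i) (ResG C i)) *
             (subAB Sg (ResG C i) (ResG C i)
              - subAB Sg (ResG C i) (SepG C i) * (subAB Sg (SepG C i) (SepG C i))⁻¹
                  * subAB Sg (SepG C i) (ResG C i))⁻¹)
          + Matrix.trace
            ((subAB x (ResG C i) (SepG C i) * (subAB x (SepG C i) (SepG C i))⁻¹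
              - subAB Sg (ResG C i) (SepG C i) * (subAB Sg (SepG C i) (SepG C i))⁻¹)ᵀ *
             (subAB Sg (ResG C i) (ResG C i)
              - subAB Sg (ResG C i) (SepG C i) * (subAB Sg (SepG C i) (SepG C i))⁻¹
                  * subAB Sg (SepG C i) (ResG C i))⁻¹ *
             (subAB x (ResG C i) (SepG C i) * (subAB x (SepG C i) (SepG C i))⁻¹
              - subAB Sg (ResG C i) (SepG C i) * (subAB Sg (SepG C i) (SepG C i))⁻¹) *
             subAB x (SepG C i) (SepG C i))) := by
  classical
  have hxsymm : x.IsSymm := hx.1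
  have hσsymm : Sg.IsSymm := by
    ext i j
    have h1 := congrFun (congrFun hSg.isHermitian (i : Fin r)) (j : Fin r)
    simpa using h1
  have hedge : ∀ a b : Fin r, (a, b) ∈ E → ∃ l : Fin k, a ∈ C l ∧ b ∈ C l := by
    intro a b hab
    have hcomp : IsCompleteSet E {a, b} := by
      intro u hu v hv huv
      simp only [Finset.mem_insert, Finset.mem_singleton] at hu hv
      rcases hu with rfl | rfl <;> rcases hv with rfl | rfl
      · exact absurd rfl huv
      · exact hab
      · exact hEsymm _ _ hab
      · exact absurd rfl huv
    obtain ⟨Bc, hBc, hDB⟩ := existsMaxClique E {a, b} hcomp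
    obtain ⟨l, rfl⟩ := hall Bc hBc
    exact ⟨l, hDB (by simp), hDB (by simp)⟩
  have hcover : ∀ v : Fin r, ∃ l : Fin k, v ∈ C l := fun v =>
    (hedge v v (hEdiag v)).imp fun l h => h.1
  have hperf' : ∀ j : Fin k, (j : ℕ) ≠ 0 → ∃ l, l < j ∧ Dec.sepV C j ⊆ C l := hperf
  have hsupp : ∀ i j : Fin r, Sg⁻¹ i j ≠ 0 → ∃ l : Fin k, i ∈ C l ∧ j ∈ C l := by
    intro i j hne
    by_cases hE : (i, j) ∈ E
    · exact hedge i j hE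
    · exact absurd (hSginv.2 i j hE) hne
  have hmain := Dec.main k (Fin r) C hcover hperf' Sg⁻¹ hSg.inv hsupp
  rw [Matrix.nonsing_inv_nonsing_inv Sg (isUnit_iff_ne_zero.2 hSg.det_pos.ne')] at hmain
  set t0 : Fin k := ⟨0, hk⟩ with ht0
  have hsplit : ∀ f : Fin k → ℝ, (∑ l : Fin k, f l)
      = f t0 + ∑ l ∈ Finset.univ.filter (fun i : Fin k => (i : ℕ) ≠ 0), f l := by
    intro f
    have hsum := Finset.sum_filter_add_sum_filter_not Finset.univ
      (fun i : Fin k => (i : ℕ) ≠ 0) f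
    have hsingle : Finset.univ.filter (fun i : Fin k => ¬((i : ℕ) ≠ 0)) = {t0} := by
      ext i
      simp [Fin.ext_iff, ht0]
    rw [hsingle, Finset.sum_singleton] at hsum
    rw [← hsum]
    ring
  have hS0 : Dec.sepV C t0 = ∅ := by
    have hf : Finset.univ.filter (fun l : Fin k => l < t0) = ∅ := by
      ext l
      simp [Fin.lt_def, ht0]
    rw [Dec.sepV, hf]
    simp
  have hTS0 : Matrix.trace (Dec.sub x (Dec.sepV C t0) (Dec.sepV C t0) *
      (Dec.sub Sg (Dec.sepV C t0) (Dec.sepV C t0))⁻¹) = 0 := by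
    rw [hS0]
    have : IsEmpty (↥(∅ : Finset (Fin r))) := Finset.isEmpty_coe_sort.2 rfl
    rw [Matrix.trace]
    simp
  have h1 : Matrix.trace (x * Sg⁻¹)
      = (∑ l : Fin k, Matrix.trace (Dec.sub x (C l) (C l) * (Dec.sub Sg (C l) (C l))⁻¹))
        - ∑ l : Fin k, Matrix.trace (Dec.sub x (Dec.sepV C l) (Dec.sepV C l) *
            (Dec.sub Sg (Dec.sepV C l) (Dec.sepV C l))⁻¹) := by
    rw [hmain, Matrix.mul_sub, Matrix.trace_sub, Matrix.mul_sum, Matrix.mul_sum,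
      Matrix.trace_sum, Matrix.trace_sum]
    congr 1 <;> exact Finset.sum_congr rfl fun l _ => Dec.trace_mul_pad x _ _
  have hper : ∀ l : Fin k,
      Matrix.trace (Dec.sub x (C l) (C l) * (Dec.sub Sg (C l) (C l))⁻¹)
        - Matrix.trace (Dec.sub x (Dec.sepV C l) (Dec.sepV C l) *
            (Dec.sub Sg (Dec.sepV C l) (Dec.sepV C l))⁻¹)
      = Matrix.trace ((Dec.sub x (ResG C l) (ResG C l)
            - Dec.sub x (ResG C l) (SepG C l) * (Dec.sub x (SepG C l) (SepG C l))⁻¹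
              * Dec.sub x (SepG C l) (ResG C l)) *
          (Dec.sub Sg (ResG C l) (ResG C l)
            - Dec.sub Sg (ResG C l) (SepG C l) * (Dec.sub Sg (SepG C l) (SepG C l))⁻¹
              * Dec.sub Sg (SepG C l) (ResG C l))⁻¹)
        + Matrix.trace ((Dec.sub x (ResG C l) (SepG C l) * (Dec.sub x (SepG C l) (SepG C l))⁻¹
            - Dec.sub Sg (ResG C l) (SepG C l) * (Dec.sub Sg (SepG C l) (SepG C l))⁻¹)ᵀ *
          (Dec.sub Sg (ResG C l) (ResG C l)
            - Dec.sub Sg (ResG C l) (SepG C l) * (Dec.sub Sg (SepG C l) (SepG C l))⁻¹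
              * Dec.sub Sg (SepG C l) (ResG C l))⁻¹ *
          (Dec.sub x (ResG C l) (SepG C l) * (Dec.sub x (SepG C l) (SepG C l))⁻¹
            - Dec.sub Sg (ResG C l) (SepG C l) * (Dec.sub Sg (SepG C l) (SepG C l))⁻¹) *
          Dec.sub x (SepG C l) (SepG C l)) := by
    intro l
    have hdisj : Disjoint (ResG C l) (SepG C l) := by
      rw [Finset.disjoint_left]
      intro v hv hv2
      rw [ResG, Finset.mem_sdiff] at hv
      rw [SepG, Finset.mem_inter] at hv2
      exact hv.2 hv2.2
    have hCl : C l = ResG C l ∪ SepG C l := by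
      ext v
      simp only [ResG, SepG, Finset.mem_union, Finset.mem_sdiff, Finset.mem_inter]
      by_cases hv : v ∈ C l <;> by_cases hb : v ∈ (Finset.univ.filter
        (fun l' : Fin k => l' < l)).biUnion C <;> tauto
    have hxUl : (Dec.sub x (ResG C l ∪ SepG C l) (ResG C l ∪ SepG C l)).PosDef := by
      rw [← hCl]
      exact hxpd l
    have hσUl : (Dec.sub Sg (ResG C l ∪ SepG C l) (ResG C l ∪ SepG C l)).PosDef :=
      Dec.sub_posDef hSg _
    have hct := Dec.cliqueTrace x Sg hdisj hxsymm hσsymm hxUl hσUl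
    have hsep : Dec.sepV C l = SepG C l := rfl
    rw [hsep]
    rw [show Matrix.trace (Dec.sub x (C l) (C l) * (Dec.sub Sg (C l) (C l))⁻¹)
      = Matrix.trace (Dec.sub x (ResG C l ∪ SepG C l) (ResG C l ∪ SepG C l) *
          (Dec.sub Sg (ResG C l ∪ SepG C l) (ResG C l ∪ SepG C l))⁻¹) from by rw [← hCl]]
    exact hct
  calc Matrix.trace (x * Sg⁻¹)
      = (∑ l : Fin k, Matrix.trace (Dec.sub x (C l) (C l) * (Dec.sub Sg (C l) (C l))⁻¹))
        - ∑ l : Fin k, Matrix.trace (Dec.sub x (Dec.sepV C l) (Dec.sepV C l) *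
            (Dec.sub Sg (Dec.sepV C l) (Dec.sepV C l))⁻¹) := h1
    _ = Matrix.trace (Dec.sub x (C t0) (C t0) * (Dec.sub Sg (C t0) (C t0))⁻¹)
        + ∑ l ∈ Finset.univ.filter (fun i : Fin k => (i : ℕ) ≠ 0),
            (Matrix.trace (Dec.sub x (C l) (C l) * (Dec.sub Sg (C l) (C l))⁻¹)
              - Matrix.trace (Dec.sub x (Dec.sepV C l) (Dec.sepV C l) *
                  (Dec.sub Sg (Dec.sepV C l) (Dec.sepV C l))⁻¹)) := by
        rw [hsplit (fun l => Matrix.trace (Dec.sub x (C l) (C l) * (Dec.sub Sg (C l) (C l))⁻¹)),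
          hsplit (fun l => Matrix.trace (Dec.sub x (Dec.sepV C l) (Dec.sepV C l) *
            (Dec.sub Sg (Dec.sepV C l) (Dec.sepV C l))⁻¹)),
          hTS0, Finset.sum_sub_distrib]
        ring
    _ = _ := by
        rw [Finset.sum_congr rfl fun l _ => hper l]
        exact rfl
end
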